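/- Let R be a local domain with maximal ideal m, residue characteristic ≠ 2, and ρ : G → GL₂(Frac R) with tr ρ(G) ⊆ R admitting g₀ ∈ G whose characteristic polynomial has roots in R distinct mod m. Then there exists a unique ideal I(ρ) of R such that for every ideal J of R: I(ρ) ⊆ J if and only if there exist characters ϑ₁, ϑ₂ : G → (R/J)× with tr ρ mod J = ϑ₁ + ϑ₂. -/

import Mathlib

/-- the ideal of reducibility.  Let `R` be a local domain with maximal ideal
`m` and residue characteristic `≠ 2`, `K = Frac(R)`, and `ρ : G → GL₂(K)` with traces in `R`
(witnessed by a lift `t : G → R` of the trace), admitting `g₀ ∈ G` diagonalized with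
eigenvalues `λ₁, λ₂ ∈ R` distinct mod `m`.  Then there is a unique ideal `I(ρ)` of `R` such
that for every ideal `J` of `R`: `I(ρ) ⊆ J` iff there exist characters
`ϑ₁, ϑ₂ : G → (R/J)ˣ` with `tr ρ mod J = ϑ₁ + ϑ₂`. -/
theorem stmt2 {R : Type*} [CommRing R] [IsDomain R] [IsLocalRing R]
    (hchar : (2 : R) ∉ IsLocalRing.maximalIdeal R)
    {K : Type*} [Field K] [Algebra R K] [IsFractionRing R K]
    {G : Type*} [Group G] (ρ : G →* Matrix.GeneralLinearGroup (Fin 2) K)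
    (t : G → R)
    (htr : ∀ g : G, algebraMap R K (t g) = Matrix.trace ((ρ g : Matrix (Fin 2) (Fin 2) K)))
    (g₀ : G) (lam₁ lam₂ : R)
    (hdiag : (ρ g₀ : Matrix (Fin 2) (Fin 2) K)
      = Matrix.diagonal ![algebraMap R K lam₁, algebraMap R K lam₂])
    (hdist : lam₁ - lam₂ ∉ IsLocalRing.maximalIdeal R) :
    ∃! I : Ideal R, ∀ J : Ideal R,
      I ≤ J ↔ ∃ ϑ₁ ϑ₂ : G →* (R ⧸ J)ˣ,
        ∀ g : G, Ideal.Quotient.mk J (t g) = (ϑ₁ g : R ⧸ J) + (ϑ₂ g : R ⧸ J) := by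
  classical
  have hinj : Function.Injective (algebraMap R K) := IsFractionRing.injective R K
  set A : R →+* K := algebraMap R K with hA
  -- `lam₁ - lam₂` and `2` are units of `R`
  have hwu : IsUnit (lam₁ - lam₂) := by
    by_contra hu; exact hdist (IsLocalRing.mem_maximalIdeal _ |>.mpr hu)
  have h2u : IsUnit (2 : R) := by
    by_contra hu; exact hchar (IsLocalRing.mem_maximalIdeal _ |>.mpr hu)
  obtain ⟨w, hw⟩ := hwu
  obtain ⟨α, hαg⟩ : ∃ f : G → R, ∀ g, f g = (↑w⁻¹ : R) * (t (g₀ * g) - lam₂ * t g) :=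
    ⟨_, fun _ => rfl⟩
  obtain ⟨δ, hδg⟩ : ∃ f : G → R, ∀ g, f g = (↑w⁻¹ : R) * (lam₁ * t g - t (g₀ * g)) :=
    ⟨_, fun _ => rfl⟩
  have hwinv : (↑w⁻¹ : R) * (lam₁ - lam₂) = 1 := by rw [← hw]; exact w.inv_mul
  have h1 : ∀ g, α g + δ g = t g := by
    intro g; rw [hαg, hδg]; linear_combination (t g) * hwinv
  have h2 : ∀ g, lam₁ * α g + lam₂ * δ g = t (g₀ * g) := by
    intro g; rw [hαg, hδg]; linear_combination (t (g₀ * g)) * hwinv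
  -- K-side matrix entries
  have hmulmat : ∀ g g' : G, (ρ (g * g') : Matrix (Fin 2) (Fin 2) K)
      = (ρ g : Matrix (Fin 2) (Fin 2) K) * (ρ g' : Matrix (Fin 2) (Fin 2) K) := by
    intro g g'; simp [map_mul]
  have Aw1 : A (↑w⁻¹ : R) * (A lam₁ - A lam₂) = 1 := by
    rw [← map_sub, ← map_mul, hwinv, map_one]
  have htg0 : ∀ g : G, A (t (g₀ * g))
      = A lam₁ * (ρ g : Matrix (Fin 2) (Fin 2) K) 0 0
        + A lam₂ * (ρ g : Matrix (Fin 2) (Fin 2) K) 1 1 := by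
    intro g
    rw [hA, htr, hmulmat, hdiag, Matrix.trace_fin_two, Matrix.diagonal_mul, Matrix.diagonal_mul]
    simp
    rfl
  have htsum : ∀ g : G, A (t g)
      = (ρ g : Matrix (Fin 2) (Fin 2) K) 0 0 + (ρ g : Matrix (Fin 2) (Fin 2) K) 1 1 := by
    intro g; rw [hA, htr, Matrix.trace_fin_two]
  have ha : ∀ g : G, A (α g) = (ρ g : Matrix (Fin 2) (Fin 2) K) 0 0 := by
    intro g
    have e1 := htg0 g
    have e2 := htsum g
    rw [hαg, map_mul, map_sub, map_mul]
    linear_combination A (↑w⁻¹ : R) * e1 - A (↑w⁻¹ : R) * A lam₂ * e2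
      + ((ρ g : Matrix (Fin 2) (Fin 2) K) 0 0) * Aw1
  have hd : ∀ g : G, A (δ g) = (ρ g : Matrix (Fin 2) (Fin 2) K) 1 1 := by
    intro g
    have e1 := htg0 g
    have e2 := htsum g
    rw [hδg, map_mul, map_sub, map_mul]
    linear_combination A (↑w⁻¹ : R) * A lam₁ * e2 - A (↑w⁻¹ : R) * e1
      + ((ρ g : Matrix (Fin 2) (Fin 2) K) 1 1) * Aw1
  -- entry multiplication identities
  have hK00 : ∀ g g' : G, (ρ (g * g') : Matrix (Fin 2) (Fin 2) K) 0 0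
      = (ρ g : Matrix (Fin 2) (Fin 2) K) 0 0 * (ρ g' : Matrix (Fin 2) (Fin 2) K) 0 0
        + (ρ g : Matrix (Fin 2) (Fin 2) K) 0 1 * (ρ g' : Matrix (Fin 2) (Fin 2) K) 1 0 := by
    intro g g'; rw [hmulmat, Matrix.mul_apply, Fin.sum_univ_two]
  have hK11 : ∀ g g' : G, (ρ (g * g') : Matrix (Fin 2) (Fin 2) K) 1 1
      = (ρ g : Matrix (Fin 2) (Fin 2) K) 1 0 * (ρ g' : Matrix (Fin 2) (Fin 2) K) 0 1
        + (ρ g : Matrix (Fin 2) (Fin 2) K) 1 1 * (ρ g' : Matrix (Fin 2) (Fin 2) K) 1 1 := by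
    intro g g'; rw [hmulmat, Matrix.mul_apply, Fin.sum_univ_two]
  obtain ⟨r, hrg⟩ : ∃ f : G → G → R, ∀ g g', f g g' = α (g * g') - α g * α g' :=
    ⟨_, fun _ _ => rfl⟩
  have hr : ∀ g g' : G, A (r g g')
      = (ρ g : Matrix (Fin 2) (Fin 2) K) 0 1 * (ρ g' : Matrix (Fin 2) (Fin 2) K) 1 0 := by
    intro g g'
    rw [hrg, map_sub, map_mul, ha, ha, ha, hK00]
    ring
  have hs : ∀ g g' : G, δ (g * g') - δ g * δ g' = r g' g := by
    intro g g'
    apply hinj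
    rw [hrg, map_sub, map_mul, hd, hd, hd, hK11, map_sub, map_mul, ha, ha, ha, hK00]
    ring
  have hα1 : α 1 = 1 := by
    apply hinj
    rw [ha, map_one]
    simp
  have hδ1 : δ 1 = 1 := by
    apply hinj
    rw [hd, map_one]
    simp
  have ht0 : t g₀ = lam₁ + lam₂ := by
    apply hinj
    rw [hA, htr, hdiag, Matrix.trace_fin_two, map_add]
    simp
    rfl
  have hag0 : (ρ g₀ : Matrix (Fin 2) (Fin 2) K) 0 0 = A lam₁ := by rw [hdiag]; simp
  have hdg0 : (ρ g₀ : Matrix (Fin 2) (Fin 2) K) 1 1 = A lam₂ := by rw [hdiag]; simp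
  have ht00 : t (g₀ * g₀) = lam₁ * lam₁ + lam₂ * lam₂ := by
    apply hinj
    rw [htg0 g₀, hag0, hdg0]
    push_cast [map_add, map_mul]
    ring
  -- the ideal of reducibility
  set I : Ideal R := Ideal.span {x : R | ∃ g g' : G, x = r g g'} with hIdef
  have main : ∀ J : Ideal R,
      I ≤ J ↔ ∃ ϑ₁ ϑ₂ : G →* (R ⧸ J)ˣ,
        ∀ g : G, Ideal.Quotient.mk J (t g) = (ϑ₁ g : R ⧸ J) + (ϑ₂ g : R ⧸ J) := by
    intro J
    set q : R →+* (R ⧸ J) := Ideal.Quotient.mk J with hq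
    constructor
    · -- forward: I ≤ J gives characters from α, δ
      intro hIJ
      have hrJ : ∀ g g' : G, q (r g g') = 0 := fun g g' =>
        (Ideal.Quotient.eq_zero_iff_mem).mpr (hIJ (Ideal.subset_span ⟨g, g', rfl⟩))
      have hmulα : ∀ g g' : G, q (α (g * g')) = q (α g) * q (α g') := by
        intro g g'
        have h := hrJ g g'
        rw [hrg, map_sub, map_mul, sub_eq_zero] at h
        exact h
      have hmulδ : ∀ g g' : G, q (δ (g * g')) = q (δ g) * q (δ g') := by
        intro g g'
        have h := congrArg q (hs g g')
        rw [hrJ g' g, map_sub, map_mul, sub_eq_zero] at h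
        exact h
      have hαu : ∀ g : G, q (α g) * q (α g⁻¹) = 1 := by
        intro g; rw [← hmulα, mul_inv_cancel, hα1, map_one]
      have hδu : ∀ g : G, q (δ g) * q (δ g⁻¹) = 1 := by
        intro g; rw [← hmulδ, mul_inv_cancel, hδ1, map_one]
      refine ⟨⟨⟨fun g => ⟨q (α g), q (α g⁻¹), hαu g, by rw [mul_comm]; exact hαu g⟩, ?_⟩, ?_⟩,
        ⟨⟨fun g => ⟨q (δ g), q (δ g⁻¹), hδu g, by rw [mul_comm]; exact hδu g⟩, ?_⟩, ?_⟩, ?_⟩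
      · exact Units.ext (by simp [hα1])
      · intro g g'; exact Units.ext (hmulα g g')
      · exact Units.ext (by simp [hδ1])
      · intro g g'; exact Units.ext (hmulδ g g')
      · intro g
        show q (t g) = q (α g) + q (δ g)
        rw [← map_add, h1 g]
    · -- backward: characters force I ≤ J
      rintro ⟨ϑ₁, ϑ₂, hsum⟩
      by_cases hJ : J = ⊤
      · subst hJ; exact le_top
      haveI : Nontrivial (R ⧸ J) := Ideal.Quotient.nontrivial_iff.mpr hJ
      haveI : IsLocalRing (R ⧸ J) := IsLocalRing.of_surjective' q Ideal.Quotient.mk_surjective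
      have hLu : IsUnit (q lam₁ - q lam₂) := by
        rw [← map_sub]
        exact IsUnit.map q ⟨w, hw⟩
      -- key: a pair of characters whose value at g₀ is (lam₁, ·) agrees with α
      have key : ∀ χ₁ χ₂ : G →* (R ⧸ J)ˣ,
          (∀ g : G, q (t g) = (χ₁ g : R ⧸ J) + (χ₂ g : R ⧸ J)) →
          ((χ₁ g₀ : R ⧸ J) = q lam₁) → ∀ g : G, q (α g) = (χ₁ g : R ⧸ J) := by
        intro χ₁ χ₂ hS h0 g
        have h0' : (χ₂ g₀ : R ⧸ J) = q lam₂ := by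
          have h := hS g₀
          rw [ht0, map_add, h0] at h
          linear_combination -h
        have e1 : q (α g) + q (δ g) = (χ₁ g : R ⧸ J) + (χ₂ g : R ⧸ J) := by
          rw [← map_add, h1 g]; exact hS g
        have e2 : q lam₁ * q (α g) + q lam₂ * q (δ g)
            = q lam₁ * (χ₁ g : R ⧸ J) + q lam₂ * (χ₂ g : R ⧸ J) := by
          have h := hS (g₀ * g)
          rw [← h2 g, map_add, map_mul, map_mul] at h
          rw [map_mul χ₁, map_mul χ₂] at h
          push_cast at h
          rw [h0, h0'] at h
          exact h
        have e3 : (q lam₁ - q lam₂) * (q (α g) - (χ₁ g : R ⧸ J)) = 0 := by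
          linear_combination e2 - q lam₂ * e1
        have := hLu.mul_right_eq_zero.mp e3
        linear_combination this
      -- a character χ with q ∘ α = χ
      have hχ : ∃ χ : G →* (R ⧸ J)ˣ, ∀ g : G, q (α g) = (χ g : R ⧸ J) := by
        set x : R ⧸ J := (ϑ₁ g₀ : R ⧸ J) with hx
        set y : R ⧸ J := (ϑ₂ g₀ : R ⧸ J) with hy
        have hsum0 : x + y = q lam₁ + q lam₂ := by
          have h := hsum g₀; rw [ht0, map_add] at h; exact h.symm
        have hsq : x * x + y * y = q lam₁ * q lam₁ + q lam₂ * q lam₂ := by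
          have h := hsum (g₀ * g₀)
          rw [ht00, map_add, map_mul, map_mul, map_mul ϑ₁, map_mul ϑ₂] at h
          push_cast at h
          exact h.symm
        have h2q : IsUnit (2 : R ⧸ J) := by
          have := h2u.map q
          rwa [map_ofNat] at this
        have hxy : x * y = q lam₁ * q lam₂ := by
          have h : (2 : R ⧸ J) * (x * y) = (2 : R ⧸ J) * (q lam₁ * q lam₂) := by
            linear_combination (x + y + q lam₁ + q lam₂) * hsum0 - hsq
          exact h2q.mul_left_cancel h
        have hprod0 : (x - q lam₁) * (x - q lam₂) = 0 := by
          linear_combination x * hsum0 - hxy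
        have hone : IsUnit ((x - q lam₁) + -(x - q lam₂)) := by
          have : (x - q lam₁) + -(x - q lam₂) = -(q lam₁ - q lam₂) := by ring
          rw [this]
          exact hLu.neg
        rcases IsLocalRing.isUnit_or_isUnit_of_isUnit_add hone with hu | hu
        · -- x = q lam₂, so ϑ₂ g₀ = q lam₁; use χ := ϑ₂
          have hx2 : x - q lam₂ = 0 := hu.mul_right_eq_zero.mp hprod0
          have hy1 : (ϑ₂ g₀ : R ⧸ J) = q lam₁ := by
            rw [← hy]; linear_combination hsum0 - hx2
          exact ⟨ϑ₂, key ϑ₂ ϑ₁ (fun g => by rw [hsum g]; ring) hy1⟩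
        · -- x = q lam₁; use χ := ϑ₁
          have hu' : IsUnit (x - q lam₂) := by simpa using hu.neg
          have hx1 : x - q lam₁ = 0 := by
            have h := hprod0
            rw [mul_comm] at h
            exact hu'.mul_right_eq_zero.mp h
          have hx1' : (ϑ₁ g₀ : R ⧸ J) = q lam₁ := by rw [← hx]; linear_combination hx1
          exact ⟨ϑ₁, key ϑ₁ ϑ₂ hsum hx1'⟩
      obtain ⟨χ, hχα⟩ := hχ
      rw [hIdef, Ideal.span_le]
      rintro x ⟨g, g', rfl⟩
      rw [SetLike.mem_coe, ← Ideal.Quotient.eq_zero_iff_mem]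
      show q (r g g') = 0
      rw [hrg, map_sub, map_mul, hχα, hχα, hχα, map_mul χ]
      push_cast
      ring
  exact ⟨I, main, fun I' hI' => le_antisymm ((hI' I).mpr ((main I).mp le_rfl))
    ((main I').mpr ((hI' I').mp le_rfl))⟩
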